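/- Let K₀ + 2K₂ < 0, β₂ > 0, μ₀ > 0, and define A± = (-β₂ ∓ √(β₂² - 4μ₀(K₀+2K₂)))/(2(K₀+2K₂)) and the energy E(A) = (3μ₀/2)A² + β₂A³ + 3(K₀+2K₂)A⁴/4. Then E(A₊) - E(A₋) = -β₂(β₂² - 4μ₀(K₀+2K₂))^{3/2}/(4(K₀+2K₂)³), which is strictly positive. -/

import Mathlib

/-- With `K₀ + 2K₂ < 0`, `β₂ > 0`, `μ₀ > 0`, for the hexagon amplitudes
`A± = (-β₂ ∓ √(β₂² - 4μ₀(K₀+2K₂)))/(2(K₀+2K₂))` and the energy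
`E(A) = (3μ₀/2)A² + β₂A³ + 3(K₀+2K₂)A⁴/4`, one has
`E(A₊) - E(A₋) = -β₂(β₂² - 4μ₀(K₀+2K₂))^{3/2}/(4(K₀+2K₂)³) > 0`. -/
theorem stmt13 (μ₀ β₂ K₀ K₂ : ℝ) (h1 : K₀ + 2 * K₂ < 0) (hβ : 0 < β₂) (hμ : 0 < μ₀)
    (E : ℝ → ℝ)
    (hE : ∀ A : ℝ, E A = 3 * μ₀ / 2 * A^2 + β₂ * A^3 + 3 * (K₀ + 2 * K₂) * A^4 / 4)
    (Ap Am : ℝ)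
    (hAp : Ap = (-β₂ - Real.sqrt (β₂^2 - 4 * μ₀ * (K₀ + 2 * K₂))) / (2 * (K₀ + 2 * K₂)))
    (hAm : Am = (-β₂ + Real.sqrt (β₂^2 - 4 * μ₀ * (K₀ + 2 * K₂))) / (2 * (K₀ + 2 * K₂))) :
    E Ap - E Am
      = -β₂ * (Real.sqrt (β₂^2 - 4 * μ₀ * (K₀ + 2 * K₂)))^3 / (4 * (K₀ + 2 * K₂)^3) ∧
    0 < E Ap - E Am := by
  have key : ∀ k s : ℝ, k ≠ 0 → s^2 = β₂^2 - 4 * μ₀ * k →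
      (3 * μ₀ / 2 * ((-β₂ - s)/(2*k))^2 + β₂ * ((-β₂ - s)/(2*k))^3
          + 3 * k * ((-β₂ - s)/(2*k))^4 / 4)
      - (3 * μ₀ / 2 * ((-β₂ + s)/(2*k))^2 + β₂ * ((-β₂ + s)/(2*k))^3
          + 3 * k * ((-β₂ + s)/(2*k))^4 / 4)
      = -β₂ * s^3 / (4 * k^3) := by
    intro k s hkne hs2
    field_simp
    ring_nf
    linear_combination (24 * β₂ * s) * hs2
  set k := K₀ + 2 * K₂ with hk
  have hD : 0 < β₂^2 - 4 * μ₀ * k := by nlinarith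
  set s := Real.sqrt (β₂^2 - 4 * μ₀ * k) with hs
  have hs2 : s^2 = β₂^2 - 4 * μ₀ * k := Real.sq_sqrt hD.le
  have hspos : 0 < s := Real.sqrt_pos.mpr hD
  have hkne : k ≠ 0 := ne_of_lt h1
  have heq : E Ap - E Am = -β₂ * s^3 / (4 * k^3) := by
    rw [hE, hE, hAp, hAm]
    exact key k s hkne hs2
  refine ⟨heq, ?_⟩
  rw [heq]
  apply div_pos_of_neg_of_neg
  · nlinarith [pow_pos hspos 3]
  · nlinarith [pow_pos (neg_pos.mpr h1) 3]
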